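/- Consider a Markov chain on the path {0,1,...,d} with loop probabilities α_i ≥ 1/2 at each node and positive upward probabilities. Then the first-passage probability f_{0,d}(t) from node 0 to node d is log-concave in t. -/

import Mathlib

/-- Transition matrix of a random walk on the path `0,1,...,d`: loop probability
`α i` at node `i`, upward probability `β i`, downward probability `1 - α i - β i`. -/
def pathP (d : ℕ) (α β : ℕ → ℝ) : Matrix (Fin (d + 1)) (Fin (d + 1)) ℝ :=
  fun i j =>
    if j.val = i.val then α i.val
    else if j.val = i.val + 1 then β i.val
    else if j.val + 1 = i.val then 1 - α i.val - β i.val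
    else 0

/-- The walk killed upon reaching node `d`. -/
def pathQ (d : ℕ) (α β : ℕ → ℝ) : Matrix (Fin (d + 1)) (Fin (d + 1)) ℝ :=
  fun i j => if j = Fin.last d then 0 else pathP d α β i j

/-- First-passage probabilities from node `0` to node `d`. -/
noncomputable def firstPassage (d : ℕ) (α β : ℕ → ℝ) : ℕ → ℝ
  | 0 => 0
  | (t + 1) => ∑ j, (pathQ d α β ^ t) 0 j * pathP d α β j (Fin.last d)

open Finset

/-- Complete homogeneous symmetric function of the list entries, degree `m` (zero for `m < 0`). -/
noncomputable def Hz : List ℝ → ℤ → ℝ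
  | [], m => if m = 0 then 1 else 0
  | (x :: l), m =>
      if m < 0 then 0 else ∑ j ∈ Finset.range (m.toNat + 1), x ^ j * Hz l (m - j)

lemma Hz_neg (l : List ℝ) {m : ℤ} (hm : m < 0) : Hz l m = 0 := by
  cases l with
  | nil => simp [Hz, hm.ne]
  | cons x l => simp [Hz, hm]

lemma Hz_nil (m : ℤ) : Hz [] m = if m = 0 then 1 else 0 := rfl

lemma Hz_step (x : ℝ) (l : List ℝ) (m : ℤ) :
    Hz (x :: l) m = x * Hz (x :: l) (m - 1) + Hz l m := by
  rcases lt_trichotomy m 0 with hm | hm | hm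
  · rw [Hz_neg _ hm, Hz_neg _ (by omega), Hz_neg _ hm]; ring
  · subst hm
    rw [Hz_neg _ (by norm_num : (0:ℤ) - 1 < 0)]
    simp [Hz]
  · have h1 : ¬ m < 0 := by omega
    have h2 : ¬ m - 1 < 0 := by omega
    obtain ⟨k, hk⟩ : ∃ k : ℕ, m.toNat = k + 1 := ⟨(m-1).toNat, by omega⟩
    have hk' : (m - 1).toNat = k := by omega
    rw [Hz, Hz, if_neg h1, if_neg h2, hk, hk']
    rw [Finset.sum_range_succ']
    have this1 : ∀ j ∈ Finset.range (k+1),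
        x ^ (j+1) * Hz l (m - ((j+1 : ℕ) : ℤ)) = x * (x ^ j * Hz l (m - 1 - j)) := by
      intro j _
      have h3 : m - ((j+1:ℕ) : ℤ) = m - 1 - j := by push_cast; ring
      rw [h3, pow_succ]; ring
    rw [Finset.sum_congr rfl this1, ← Finset.mul_sum]
    norm_num

lemma Hz_nonneg (l : List ℝ) (hl : ∀ x ∈ l, 0 ≤ x) : ∀ m : ℤ, 0 ≤ Hz l m := by
  induction l with
  | nil => intro m; rw [Hz_nil]; split <;> norm_num
  | cons x l ih =>
    intro m
    rw [Hz]
    split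
    · exact le_refl 0
    · refine Finset.sum_nonneg fun j _ => mul_nonneg (pow_nonneg (hl x (by simp)) j) ?_
      exact ih (fun y hy => hl y (by simp [hy])) _

lemma Hz_zero (l : List ℝ) : Hz l 0 = 1 := by
  induction l with
  | nil => simp [Hz_nil]
  | cons x l ih => rw [Hz_step, Hz_neg _ (by norm_num), ih]; ring

lemma spread {u : ℤ → ℝ} (hpos : ∀ m, 0 ≤ u m)
    (hlc : ∀ a b : ℤ, a ≤ b → u a * u (b+1) ≤ u (a+1) * u b) :
    ∀ (k : ℕ) (p q : ℤ), p ≤ q → u (p - k) * u (q + k) ≤ u p * u q := by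
  intro k
  induction k with
  | zero => intro p q _; norm_num
  | succ k ih =>
    intro p q hpq
    have h1 : u ((p-1) - k) * u ((q+1) + k) ≤ u (p-1) * u (q+1) := ih (p-1) (q+1) (by omega)
    have h2 : u (p-1) * u (q+1) ≤ u p * u q := by
      have := hlc (p-1) q (by omega)
      simpa using this
    have e1 : (p - 1) - (k:ℤ) = p - (k+1 : ℕ) := by push_cast; ring
    have e2 : (q + 1) + (k:ℤ) = q + (k+1 : ℕ) := by push_cast; ring
    rw [e1, e2] at h1
    exact h1.trans h2

lemma Hz_lc (l : List ℝ) (hl : ∀ x ∈ l, 0 ≤ x) :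
    ∀ a b : ℤ, a ≤ b → Hz l a * Hz l (b+1) ≤ Hz l (a+1) * Hz l b := by
  induction l with
  | nil =>
    intro a b hab
    have hr : 0 ≤ Hz [] (a+1) * Hz [] b :=
      mul_nonneg (Hz_nonneg [] (by simp) _) (Hz_nonneg [] (by simp) _)
    rcases eq_or_ne a 0 with ha | ha
    · subst ha
      have : Hz [] (b+1) = 0 := by rw [Hz_nil, if_neg (by omega)]
      rw [this]; simpa using hr
    · have : Hz [] a = 0 := by rw [Hz_nil, if_neg ha]
      rw [this]; simpa using hr
  | cons x l ih =>
    intro a b hab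
    have hx : 0 ≤ x := hl x (by simp)
    have hl' : ∀ y ∈ l, 0 ≤ y := fun y hy => hl y (by simp [hy])
    have hupos : ∀ m, 0 ≤ Hz l m := Hz_nonneg l hl'
    have hVpos : ∀ m, 0 ≤ Hz (x :: l) m := Hz_nonneg (x :: l) hl
    rcases lt_or_ge a 0 with ha | ha
    · rw [Hz_neg _ ha]
      simpa using mul_nonneg (hVpos (a+1)) (hVpos b)
    · -- key rearrangement
      have key : Hz (x::l) (a+1) * Hz (x::l) b - Hz (x::l) a * Hz (x::l) (b+1)
          = Hz l (a+1) * Hz (x::l) b - Hz l (b+1) * Hz (x::l) a := by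
        rw [Hz_step x l (a+1), Hz_step x l (b+1)]
        have e1 : a + 1 - 1 = a := by ring
        have e2 : b + 1 - 1 = b := by ring
        rw [e1, e2]; ring
      rw [← sub_nonneg, key]
      have hb : (0:ℤ) ≤ b := le_trans ha hab
      set A := a.toNat with hA
      set B := b.toNat with hB
      have haA : (A : ℤ) = a := Int.toNat_of_nonneg ha
      have hbB : (B : ℤ) = b := Int.toNat_of_nonneg hb
      have hAB : A + 1 ≤ B + 1 := by omega
      have hVb : Hz (x::l) b = ∑ j ∈ Finset.range (B + 1), x ^ j * Hz l (b - j) := by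
        rw [Hz, if_neg (by omega), ← hB]
      have hVa : Hz (x::l) a = ∑ j ∈ Finset.range (A + 1), x ^ j * Hz l (a - j) := by
        rw [Hz, if_neg (by omega), ← hA]
      rw [hVb, hVa, Finset.mul_sum, Finset.mul_sum]
      rw [Finset.range_eq_Ico, ← Finset.sum_Ico_consecutive _ (Nat.zero_le (A+1)) hAB]
      have hsplit : ∀ j ∈ Finset.Ico 0 (A+1),
          Hz l (b+1) * (x ^ j * Hz l (a - j)) ≤ Hz l (a+1) * (x ^ j * Hz l (b - j)) := by
        intro j hj
        simp only [Finset.mem_Ico] at hj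
        have hja : (j : ℤ) ≤ a := by omega
        have hcore : Hz l (a - j) * Hz l (b + 1) ≤ Hz l (a+1) * Hz l (b - j) := by
          rcases le_or_gt (a + 1) (b - j) with hcase | hcase
          · have := spread hupos (fun a b h => ih hl' a b h) (j+1) (a+1) (b - j) hcase
            have e1 : (a+1) - ((j+1:ℕ):ℤ) = a - j := by push_cast; ring
            have e2 : (b-j) + ((j+1:ℕ):ℤ) = b + 1 := by push_cast; ring
            rw [e1, e2] at this
            linarith [this]
          · have hk : ((b - a).toNat : ℤ) = b - a := Int.toNat_of_nonneg (by omega)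
            have := spread hupos (fun a b h => ih hl' a b h) (b-a).toNat (b - j) (a+1) (by omega)
            rw [hk] at this
            have e1 : b - j - (b - a) = a - j := by ring
            have e2 : a + 1 + (b - a) = b + 1 := by ring
            rw [e1, e2] at this
            linarith [this]
        calc Hz l (b+1) * (x ^ j * Hz l (a - j)) = x ^ j * (Hz l (a-j) * Hz l (b+1)) := by ring
          _ ≤ x ^ j * (Hz l (a+1) * Hz l (b - j)) := by
              exact mul_le_mul_of_nonneg_left hcore (pow_nonneg hx j)
          _ = Hz l (a+1) * (x ^ j * Hz l (b - j)) := by ring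
      have h2 : 0 ≤ ∑ j ∈ Finset.Ico (A+1) (B+1), Hz l (a+1) * (x ^ j * Hz l (b - j)) := by
        refine Finset.sum_nonneg fun j _ => ?_
        exact mul_nonneg (hupos _) (mul_nonneg (pow_nonneg hx j) (hupos _))
      have h1 := Finset.sum_le_sum hsplit
      rw [← Finset.range_eq_Ico] at h1 ⊢
      linarith [h1, h2]

/-- Elementary symmetric functions of a list. -/
noncomputable def Esym : List ℝ → ℕ → ℝ
  | [], 0 => 1
  | [], _ + 1 => 0
  | (_ :: l), 0 => Esym l 0
  | (x :: l), (j + 1) => Esym l (j + 1) + x * Esym l j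

lemma Esym_zero (l : List ℝ) : Esym l 0 = 1 := by
  induction l with
  | nil => rfl
  | cons x l ih => rw [Esym, ih]

lemma Esym_gt (l : List ℝ) : ∀ j, l.length < j → Esym l j = 0 := by
  induction l with
  | nil => intro j hj; obtain ⟨k, rfl⟩ : ∃ k, j = k + 1 := ⟨j - 1, by omega⟩; rfl
  | cons x l ih =>
    intro j hj
    obtain ⟨k, rfl⟩ : ∃ k, j = k + 1 := ⟨j - 1, by omega⟩
    simp only [List.length_cons] at hj
    rw [Esym, ih (k+1) (by omega), ih k (by omega)]
    ring

/-- Newton-type identity relating `Esym` and `Hz`. -/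
lemma esym_hz (l : List ℝ) : ∀ m : ℤ,
    ∑ j ∈ Finset.range (l.length + 1), (-1 : ℝ) ^ j * Esym l j * Hz l (m - j)
      = if m = 0 then 1 else 0 := by
  induction l with
  | nil => intro m; simp [Esym, Hz_nil]
  | cons x l ih =>
    intro m
    have hlen : (x :: l).length = l.length + 1 := rfl
    have hA1 : ∑ j ∈ Finset.range (l.length+1), (-1:ℝ)^j * Esym l j * Hz (x::l) (m - j)
        = x * (∑ j ∈ Finset.range (l.length+1), (-1:ℝ)^j * Esym l j * Hz (x::l) (m - 1 - j))
          + (if m = 0 then 1 else 0) := by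
      rw [← ih m, Finset.mul_sum, ← Finset.sum_add_distrib]
      refine Finset.sum_congr rfl fun j _ => ?_
      have h3 : m - (j:ℤ) - 1 = m - 1 - (j:ℤ) := by ring
      rw [Hz_step x l (m - j), h3]
      ring
    have hA2 : ∑ j ∈ Finset.range (l.length+1), (-1:ℝ)^j * Esym l j * Hz (x::l) (m - j)
        = Hz (x::l) m
          - ∑ j ∈ Finset.range l.length, (-1:ℝ)^j * Esym l (j+1) * Hz (x::l) (m - 1 - j) := by
      rw [Finset.sum_range_succ']
      have h4 : ∀ j ∈ Finset.range l.length,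
          (-1:ℝ)^(j+1) * Esym l (j+1) * Hz (x::l) (m - ((j+1:ℕ):ℤ))
          = -((-1:ℝ)^j * Esym l (j+1) * Hz (x::l) (m - 1 - j)) := by
        intro j _
        have h3 : m - ((j+1:ℕ):ℤ) = m - 1 - j := by push_cast; ring
        rw [h3, pow_succ]; ring
      rw [Finset.sum_congr rfl h4, Finset.sum_neg_distrib, Esym_zero]
      norm_num
      ring
    have hS1 : ∑ j ∈ Finset.range (l.length+1), (-1:ℝ)^j * Esym l (j+1) * Hz (x::l) (m - 1 - j)
        = ∑ j ∈ Finset.range l.length, (-1:ℝ)^j * Esym l (j+1) * Hz (x::l) (m - 1 - j) := by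
      rw [Finset.sum_range_succ, Esym_gt l (l.length+1) (by omega)]
      ring
    have hG : ∑ j ∈ Finset.range ((x::l).length + 1),
        (-1 : ℝ) ^ j * Esym (x::l) j * Hz (x::l) (m - j)
        = Hz (x::l) m
          - ∑ j ∈ Finset.range (l.length+1), (-1:ℝ)^j * Esym l (j+1) * Hz (x::l) (m - 1 - j)
          - x * (∑ j ∈ Finset.range (l.length+1), (-1:ℝ)^j * Esym l j * Hz (x::l) (m - 1 - j)) := by
      rw [hlen, Finset.sum_range_succ']
      have h4 : ∀ j ∈ Finset.range (l.length+1),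
          (-1:ℝ)^(j+1) * Esym (x::l) (j+1) * Hz (x::l) (m - ((j+1:ℕ):ℤ))
          = -((-1:ℝ)^j * Esym l (j+1) * Hz (x::l) (m - 1 - j))
            - x * ((-1:ℝ)^j * Esym l j * Hz (x::l) (m - 1 - j)) := by
        intro j _
        have h3 : m - ((j+1:ℕ):ℤ) = m - 1 - j := by push_cast; ring
        rw [h3, Esym, pow_succ]
        ring
      rw [Finset.sum_congr rfl h4, Finset.sum_sub_distrib, Finset.sum_neg_distrib,
        ← Finset.mul_sum, Esym]
      rw [Esym_zero]
      norm_num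
      ring
    rw [hG, hS1]
    linarith [hA1, hA2]

lemma esym_poly (l : List ℝ) : ∀ x : ℝ,
    ∑ j ∈ Finset.range (l.length + 1), (-1 : ℝ) ^ j * Esym l j * x ^ (l.length - j)
      = (l.map (fun y => x - y)).prod := by
  induction l with
  | nil => intro x; simp [Esym]
  | cons y l ih =>
    intro x
    have hlen : (y :: l).length = l.length + 1 := rfl
    rw [hlen, Finset.sum_range_succ']
    have h4 : ∀ j ∈ Finset.range (l.length + 1),
        (-1:ℝ)^(j+1) * Esym (y::l) (j+1) * x ^ (l.length + 1 - (j+1))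
        = -((-1:ℝ)^j * Esym l (j+1) * x ^ (l.length - j))
          - y * ((-1:ℝ)^j * Esym l j * x ^ (l.length - j)) := by
      intro j hj
      simp only [Finset.mem_range] at hj
      have h3 : l.length + 1 - (j+1) = l.length - j := by omega
      rw [h3, Esym, pow_succ]
      ring
    rw [Finset.sum_congr rfl h4, Finset.sum_sub_distrib, Finset.sum_neg_distrib, ← Finset.mul_sum,
      ih x]
    have hS : ∑ j ∈ Finset.range (l.length + 1), (-1:ℝ)^j * Esym l (j+1) * x ^ (l.length - j)
        = ∑ j ∈ Finset.range l.length, (-1:ℝ)^j * Esym l (j+1) * x ^ (l.length - j) := by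
      rw [Finset.sum_range_succ, Esym_gt l (l.length+1) (by omega)]
      ring
    have hxP : x * ((l.map (fun z => x - z)).prod)
        = x ^ (l.length + 1) - ∑ j ∈ Finset.range l.length,
            (-1:ℝ)^j * Esym l (j+1) * x ^ (l.length - j) := by
      rw [← ih x, Finset.mul_sum, Finset.sum_range_succ']
      have h5 : ∀ j ∈ Finset.range l.length,
          x * ((-1:ℝ)^(j+1) * Esym l (j+1) * x ^ (l.length - (j+1)))
          = -((-1:ℝ)^j * Esym l (j+1) * x ^ (l.length - j)) := by
        intro j hj
        simp only [Finset.mem_range] at hj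
        have h6 : l.length - j = (l.length - (j+1)) + 1 := by omega
        rw [h6, pow_succ]
        ring
      rw [Finset.sum_congr rfl h5, Finset.sum_neg_distrib]
      have h7 : x * ((-1:ℝ)^0 * Esym l 0 * x ^ (l.length - 0)) = x ^ (l.length + 1) := by
        rw [Esym_zero, pow_succ]; norm_num; ring
      rw [h7]
      ring
    have hEP : (((y :: l)).map (fun z => x - z)).prod
        = (x - y) * (l.map (fun z => x - z)).prod := by
      simp
    rw [hEP]
    have h8 : (-1:ℝ)^0 * Esym (y::l) 0 * x ^ (l.length + 1 - 0) = x ^ (l.length + 1) := by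
      rw [Esym_zero]; norm_num
    rw [h8, hS]
    linarith [hxP]

/-- General tridiagonal matrix: diagonal `a`, superdiagonal `b`, subdiagonal `c`
(`c i` is the entry in row `i`, column `i-1`). -/
def tri (n : ℕ) (a b c : ℕ → ℝ) : Matrix (Fin n) (Fin n) ℝ :=
  fun i j =>
    if j.val = i.val then a i.val
    else if j.val = i.val + 1 then b i.val
    else if j.val + 1 = i.val then c i.val
    else 0

lemma triPow_early (m : ℕ) (a b c : ℕ → ℝ) :
    ∀ (t : ℕ) (j : Fin (m+1)),
      (t < j.val → ((tri (m+1) a b c) ^ t) 0 j = 0) ∧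
      (j.val = t → ((tri (m+1) a b c) ^ t) 0 j = ∏ i ∈ Finset.range t, b i) := by
  intro t
  induction t with
  | zero =>
    intro j
    constructor
    · intro hj
      have : (0 : Fin (m+1)) ≠ j := by
        intro h; rw [← h] at hj; simp at hj
      simp [Matrix.one_apply, this]
    · intro hj
      have : (0 : Fin (m+1)) = j := by
        apply Fin.ext; simp [hj.symm]; omega
      simp [Matrix.one_apply, this]
  | succ t ih =>
    intro j
    have hexp : ((tri (m+1) a b c) ^ (t+1)) 0 j
        = ∑ k, ((tri (m+1) a b c) ^ t) 0 k * tri (m+1) a b c k j := by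
      rw [pow_succ, Matrix.mul_apply]
    constructor
    · intro hj
      rw [hexp]
      apply Finset.sum_eq_zero
      intro k _
      rcases le_or_gt k.val t with hk | hk
      · have h1 : tri (m+1) a b c k j = 0 := by
          have hne1 : j.val ≠ k.val := by omega
          have hne2 : j.val ≠ k.val + 1 := by omega
          have hne3 : j.val + 1 ≠ k.val := by omega
          simp [tri, hne1, hne2, hne3]
        rw [h1, mul_zero]
      · rw [(ih k).1 hk, zero_mul]
    · intro hj
      rw [hexp]
      have hkm : t < m + 1 := by omega
      have hk0 : (⟨t, hkm⟩ : Fin (m+1)) ∈ Finset.univ := Finset.mem_univ _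
      rw [Finset.sum_eq_single_of_mem ⟨t, hkm⟩ hk0]
      · rw [(ih ⟨t, hkm⟩).2 rfl]
        have : tri (m+1) a b c ⟨t, hkm⟩ j = b t := by
          have h1 : j.val ≠ t := by omega
          simp [tri, h1, hj]
        rw [this, Finset.prod_range_succ]
      · intro k _ hkne
        rcases lt_trichotomy k.val t with hk | hk | hk
        · have h1 : tri (m+1) a b c k j = 0 := by
            have hne1 : j.val ≠ k.val := by omega
            have hne2 : j.val ≠ k.val + 1 := by omega
            have hne3 : j.val + 1 ≠ k.val := by omega
            simp [tri, hne1, hne2, hne3]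
          rw [h1, mul_zero]
        · exact absurd (Fin.ext hk) hkne
        · rw [(ih k).1 hk, zero_mul]

noncomputable def dv (b c : ℕ → ℝ) : ℕ → ℝ
  | 0 => 1
  | (i+1) => dv b c i * Real.sqrt (b i / c (i+1))

lemma dv_pos (b c : ℕ → ℝ) : ∀ k, (∀ i < k, 0 < b i ∧ 0 < c (i+1)) → 0 < dv b c k := by
  intro k
  induction k with
  | zero => intro _; norm_num [dv]
  | succ k ih =>
    intro h
    have h1 : 0 < dv b c k := ih (fun i hi => h i (by omega))
    have h2 : 0 < b k / c (k+1) := div_pos (h k (by omega)).1 (h k (by omega)).2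
    exact mul_pos h1 (Real.sqrt_pos.mpr h2)

lemma dv_key (b c : ℕ → ℝ) (i : ℕ) (hb : 0 < b i) (hc : 0 < c (i+1)) :
    dv b c (i+1) ^ 2 * c (i+1) = dv b c i ^ 2 * b i := by
  have h2 : (0:ℝ) ≤ b i / c (i+1) := le_of_lt (div_pos hb hc)
  have : dv b c (i+1) ^ 2 = dv b c i ^ 2 * (b i / c (i+1)) := by
    rw [dv]
    rw [mul_pow, Real.sq_sqrt h2]
  rw [this]
  field_simp

noncomputable def triS (m : ℕ) (a b c : ℕ → ℝ) : Matrix (Fin (m+1)) (Fin (m+1)) ℝ :=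
  fun i j => dv b c i.val * tri (m+1) a b c i j * (dv b c j.val)⁻¹

section TriLC

variable (m : ℕ) (a b c : ℕ → ℝ)

lemma dvpos (hb : ∀ i < m, 0 < b i) (hc : ∀ i < m, 0 < c (i+1)) :
    ∀ k ≤ m, 0 < dv b c k := by
  intro k hk
  exact dv_pos b c k (fun i hi => ⟨hb i (by omega), hc i (by omega)⟩)

lemma triS_symm (hb : ∀ i < m, 0 < b i) (hc : ∀ i < m, 0 < c (i+1)) :
    (triS m a b c).IsHermitian := by
  have hdv : ∀ k ≤ m, 0 < dv b c k := dvpos m b c hb hc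
  apply Matrix.IsHermitian.ext
  intro i j
  rw [star_trivial]
  have hi : i.val ≤ m := by omega
  have hj : j.val ≤ m := by omega
  rcases lt_trichotomy i.val j.val with h | h | h
  · rcases eq_or_lt_of_le (Nat.succ_le_of_lt h) with h1 | h1
    · -- j.val = i.val + 1
      have him : i.val < m := by omega
      have hMij : tri (m+1) a b c i j = b i.val := by
        simp only [tri]
        rw [if_neg (by omega), if_pos (by omega)]
      have hMji : tri (m+1) a b c j i = c (i.val + 1) := by
        simp only [tri]
        rw [if_neg (by omega), if_neg (by omega), if_pos (by omega), ← h1]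
      simp only [triS, hMij, hMji, ← h1]
      have h2 := dv_key b c i.val (hb i.val him) (hc i.val him)
      have h3 : dv b c i.val ≠ 0 := ne_of_gt (hdv i.val hi)
      have h4 : dv b c (i.val+1) ≠ 0 := ne_of_gt (hdv (i.val+1) (by omega))
      field_simp
      nlinarith [h2]
    · -- j.val ≥ i.val + 2 : both entries are 0
      have hMij : tri (m+1) a b c i j = 0 := by
        simp only [tri]
        rw [if_neg (by omega), if_neg (by omega), if_neg (by omega)]
      have hMji : tri (m+1) a b c j i = 0 := by
        simp only [tri]
        rw [if_neg (by omega), if_neg (by omega), if_neg (by omega)]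
      simp [triS, hMij, hMji]
  · simp [triS, h, Fin.ext h]
  · rcases eq_or_lt_of_le (Nat.succ_le_of_lt h) with h1 | h1
    · have hjm : j.val < m := by omega
      have hMji : tri (m+1) a b c j i = b j.val := by
        simp only [tri]
        rw [if_neg (by omega), if_pos (by omega)]
      have hMij : tri (m+1) a b c i j = c (j.val + 1) := by
        simp only [tri]
        rw [if_neg (by omega), if_neg (by omega), if_pos (by omega), ← h1]
      simp only [triS, hMij, hMji, ← h1]
      have h2 := dv_key b c j.val (hb j.val hjm) (hc j.val hjm)
      have h3 : dv b c j.val ≠ 0 := ne_of_gt (hdv j.val (by omega))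
      have h4 : dv b c (j.val+1) ≠ 0 := ne_of_gt (hdv (j.val+1) (by omega))
      field_simp
      nlinarith [h2]
    · have hMij : tri (m+1) a b c i j = 0 := by
        simp only [tri]
        rw [if_neg (by omega), if_neg (by omega), if_neg (by omega)]
      have hMji : tri (m+1) a b c j i = 0 := by
        simp only [tri]
        rw [if_neg (by omega), if_neg (by omega), if_neg (by omega)]
      simp [triS, hMij, hMji]

end TriLC

section TriLC2

variable (m : ℕ) (a b c : ℕ → ℝ)

lemma cancel_aux (x y t : ℝ) (hx : x ≠ 0) (hy : y ≠ 0) : x⁻¹ * (x * t * y⁻¹) * y = t := by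
  field_simp

lemma cancel_aux2 (u x v w z : ℝ) (hx : x ≠ 0) : u * x * (x⁻¹ * v * w) * z = u * v * w * z := by
  field_simp

lemma tri_pow_rel (hb : ∀ i < m, 0 < b i) (hc : ∀ i < m, 0 < c (i+1)) :
    ∀ (t : ℕ) (i j : Fin (m+1)),
      ((tri (m+1) a b c) ^ t) i j
        = (dv b c i.val)⁻¹ * ((triS m a b c) ^ t) i j * dv b c j.val := by
  have hdv : ∀ k ≤ m, 0 < dv b c k := dvpos m b c hb hc
  have hdvne : ∀ k : Fin (m+1), dv b c k.val ≠ 0 := fun k => ne_of_gt (hdv k.val (by omega))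
  intro t
  induction t with
  | zero =>
    intro i j
    rcases eq_or_ne i j with h | h
    · subst h; simp [Matrix.one_apply, hdvne i]
    · simp [Matrix.one_apply, h]
  | succ t ih =>
    intro i j
    rw [pow_succ, pow_succ, Matrix.mul_apply, Matrix.mul_apply]
    rw [Finset.mul_sum, Finset.sum_mul]
    refine Finset.sum_congr rfl fun k _ => ?_
    rw [ih i k]
    have hMkj : tri (m+1) a b c k j = (dv b c k.val)⁻¹ * triS m a b c k j * dv b c j.val := by
      simp only [triS]
      rw [cancel_aux _ _ _ (hdvne k) (hdvne j)]
    rw [hMkj]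
    calc (dv b c i.val)⁻¹ * (triS m a b c ^ t) i k * dv b c k.val
          * ((dv b c k.val)⁻¹ * triS m a b c k j * dv b c j.val)
        = (triS m a b c ^ t) i k * dv b c k.val * ((dv b c k.val)⁻¹
            * (triS m a b c k j) * (dv b c j.val)) * (dv b c i.val)⁻¹ := by ring
      _ = (triS m a b c ^ t) i k * triS m a b c k j * dv b c j.val * (dv b c i.val)⁻¹ := by
          rw [cancel_aux2 _ _ _ _ _ (hdvne k)]
      _ = (dv b c i.val)⁻¹ * ((triS m a b c ^ t) i k * triS m a b c k j) * dv b c j.val := by ring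

end TriLC2

section TriLC3

variable (m : ℕ) (a b c : ℕ → ℝ)

lemma tri_spectral (ha : ∀ i ≤ m, (1:ℝ)/2 ≤ a i)
    (hb : ∀ i < m, 0 < b i) (hc : ∀ i < m, 0 < c (i+1))
    (hrow : ∀ i ≤ m, (if i < m then b i else 0) + (if i ≠ 0 then c i else 0) ≤ 1 - a i) :
    ∃ (μ C : Fin (m+1) → ℝ), (∀ i, 0 ≤ μ i) ∧
      ∀ t : ℕ, ((tri (m+1) a b c) ^ t) 0 (Fin.last m) = ∑ i, C i * μ i ^ t := by
  have hS : (triS m a b c).IsHermitian := triS_symm m a b c hb hc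
  have hdv : ∀ k ≤ m, 0 < dv b c k := dvpos m b c hb hc
  set U : Matrix (Fin (m+1)) (Fin (m+1)) ℝ :=
    (Matrix.IsHermitian.eigenvectorUnitary hS : Matrix (Fin (m+1)) (Fin (m+1)) ℝ) with hU
  set μ : Fin (m+1) → ℝ := hS.eigenvalues with hμ
  have hUU : U * star U = 1 :=
    (Matrix.mem_unitaryGroup_iff).mp (Matrix.IsHermitian.eigenvectorUnitary hS).2
  have hUU' : star U * U = 1 :=
    (Matrix.mem_unitaryGroup_iff').mp (Matrix.IsHermitian.eigenvectorUnitary hS).2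
  have hspec : triS m a b c = U * Matrix.diagonal μ * star U := by
    have := hS.spectral_theorem
    simpa using this
  have hSt : ∀ t : ℕ, (triS m a b c) ^ t = U * Matrix.diagonal (fun i => μ i ^ t) * star U := by
    intro t
    induction t with
    | zero =>
      have hone : Matrix.diagonal (fun i : Fin (m+1) => μ i ^ 0) = 1 := by
        simp [Matrix.diagonal_one]
      rw [pow_zero, hone, Matrix.mul_one, hUU]
    | succ t ih =>
      rw [pow_succ, ih, hspec]
      calc U * Matrix.diagonal (fun i => μ i ^ t) * star U * (U * Matrix.diagonal μ * star U)
          = U * Matrix.diagonal (fun i => μ i ^ t) * (star U * U) * Matrix.diagonal μ * star U := by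
            noncomm_ring
        _ = U * (Matrix.diagonal (fun i => μ i ^ t) * Matrix.diagonal μ) * star U := by
            rw [hUU', Matrix.mul_one]; noncomm_ring
        _ = U * Matrix.diagonal (fun i => μ i ^ (t+1)) * star U := by
            have hd : (Matrix.diagonal (fun i : Fin (m+1) => μ i ^ t) * Matrix.diagonal μ)
                = Matrix.diagonal (fun i => μ i ^ (t+1)) := by
              rw [Matrix.diagonal_mul_diagonal]
              simp [pow_succ]
            rw [hd]
  have hentry : ∀ (f : Fin (m+1) → ℝ) (p q : Fin (m+1)),
      (U * Matrix.diagonal f * star U) p q = ∑ k, U p k * f k * U q k := by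
    intro f p q
    rw [Matrix.mul_apply]
    refine Finset.sum_congr rfl fun k _ => ?_
    rw [Matrix.mul_diagonal]
    have : (star U) k q = U q k := by
      rw [Matrix.star_apply, star_trivial]
    rw [this]
  -- eigenvalues are nonneg
  have hμpos : ∀ i, 0 ≤ μ i := by
    intro i
    -- the i-th column of U is an eigenvector of S
    have hSU : triS m a b c * U = U * Matrix.diagonal μ := by
      rw [hspec]
      calc U * Matrix.diagonal μ * star U * U = U * Matrix.diagonal μ * (star U * U) := by
            noncomm_ring
        _ = U * Matrix.diagonal μ := by rw [hUU', Matrix.mul_one]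
    have hvec : ∀ p, ∑ k, triS m a b c p k * U k i = U p i * μ i := by
      intro p
      have h1 := congrFun (congrFun hSU p) i
      rw [Matrix.mul_apply, Matrix.mul_diagonal] at h1
      exact h1
    -- column is nonzero
    have hcolnz : ∃ k, U k i ≠ 0 := by
      by_contra h
      push_neg at h
      have h1 := congrFun (congrFun hUU' i) i
      rw [Matrix.mul_apply] at h1
      have h2 : ∀ k ∈ Finset.univ, (star U) i k * U k i = 0 := by
        intro k _; rw [h k, mul_zero]
      rw [Finset.sum_eq_zero h2] at h1
      simp [Matrix.one_apply] at h1
    -- translated eigenvector of M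
    set w : Fin (m+1) → ℝ := fun k => (dv b c k.val)⁻¹ * U k i with hw
    have hMw : ∀ p : Fin (m+1), ∑ k, tri (m+1) a b c p k * w k = μ i * w p := by
      intro p
      have : ∀ k : Fin (m+1), tri (m+1) a b c p k * w k
          = (dv b c p.val)⁻¹ * (triS m a b c p k * U k i) := by
        intro k
        have hM : tri (m+1) a b c p k
            = (dv b c p.val)⁻¹ * triS m a b c p k * dv b c k.val := by
          simp only [triS]
          rw [cancel_aux _ _ _ (ne_of_gt (hdv p.val (by omega))) (ne_of_gt (hdv k.val (by omega)))]
        rw [hM, hw]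
        have hk : dv b c k.val ≠ 0 := ne_of_gt (hdv k.val (by omega))
        calc (dv b c p.val)⁻¹ * triS m a b c p k * dv b c k.val * ((dv b c k.val)⁻¹ * U k i)
            = (dv b c p.val)⁻¹ * (triS m a b c p k * U k i)
                * (dv b c k.val * (dv b c k.val)⁻¹) := by ring
          _ = (dv b c p.val)⁻¹ * (triS m a b c p k * U k i) := by
              rw [mul_inv_cancel₀ hk, mul_one]
      rw [Finset.sum_congr rfl (fun k _ => this k), ← Finset.mul_sum, hvec p]
      rw [hw]
      ring
    obtain ⟨p, _, hp⟩ := Finset.exists_max_image Finset.univ (fun k => |w k|) ⟨0, Finset.mem_univ 0⟩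
    have hwp : 0 < |w p| := by
      obtain ⟨k0, hk0⟩ := hcolnz
      have : w k0 ≠ 0 := by
        rw [hw]
        exact mul_ne_zero (inv_ne_zero (ne_of_gt (hdv k0.val (by omega)))) hk0
      calc (0:ℝ) < |w k0| := abs_pos.mpr this
        _ ≤ |w p| := hp k0 (Finset.mem_univ _)
    -- Gershgorin
    have hMpp : tri (m+1) a b c p p = a p.val := by
      simp [tri]
    have hoffnn : ∀ k : Fin (m+1), k ≠ p → 0 ≤ tri (m+1) a b c p k := by
      intro k hk
      simp only [tri]
      split_ifs with h1 h2 h3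
      · exact absurd (Fin.ext h1) hk
      · exact le_of_lt (hb p.val (by omega))
      · have : p.val = (p.val - 1) + 1 := by omega
        rw [this]
        exact le_of_lt (hc (p.val - 1) (by omega))
      · exact le_refl 0
    have hoffsum : ∑ k ∈ Finset.univ.erase p, tri (m+1) a b c p k ≤ 1 - a p.val := by
      have hsum : ∑ k ∈ Finset.univ.erase p, tri (m+1) a b c p k
          = (∑ k ∈ Finset.univ.erase p, (if k.val = p.val + 1 then b p.val else 0))
            + (∑ k ∈ Finset.univ.erase p, (if k.val + 1 = p.val then c p.val else 0)) := by
        rw [← Finset.sum_add_distrib]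
        refine Finset.sum_congr rfl fun k hk => ?_
        have hkp : k ≠ p := (Finset.mem_erase.mp hk).1
        have hkv : k.val ≠ p.val := fun h => hkp (Fin.ext h)
        simp only [tri]
        split_ifs with h1 h2 h3 <;> first | (exact absurd h1 hkv) | omega | ring
      rw [hsum]
      have hb' : (∑ k ∈ Finset.univ.erase p, (if k.val = p.val + 1 then b p.val else 0))
          = if p.val < m then b p.val else 0 := by
        by_cases hpm : p.val < m
        · rw [if_pos hpm]
          have hq : (⟨p.val + 1, by omega⟩ : Fin (m+1)) ∈ Finset.univ.erase p := by
            rw [Finset.mem_erase]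
            exact ⟨fun h => by simpa using congrArg Fin.val h, Finset.mem_univ _⟩
          rw [Finset.sum_eq_single_of_mem ⟨p.val + 1, by omega⟩ hq]
          · rw [if_pos rfl]
          · intro k _ hkq
            rw [if_neg]
            intro h
            exact hkq (Fin.ext h)
        · rw [if_neg hpm]
          apply Finset.sum_eq_zero
          intro k _
          rw [if_neg]
          omega
      have hc' : (∑ k ∈ Finset.univ.erase p, (if k.val + 1 = p.val then c p.val else 0))
          = if p.val ≠ 0 then c p.val else 0 := by
        by_cases hp0 : p.val ≠ 0
        · rw [if_pos hp0]
          have hq : (⟨p.val - 1, by omega⟩ : Fin (m+1)) ∈ Finset.univ.erase p := by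
            rw [Finset.mem_erase]
            refine ⟨fun h => ?_, Finset.mem_univ _⟩
            have := congrArg Fin.val h
            simp at this
            omega
          rw [Finset.sum_eq_single_of_mem ⟨p.val - 1, by omega⟩ hq]
          · rw [if_pos (by simp; omega)]
          · intro k _ hkq
            rw [if_neg]
            intro h
            apply hkq
            apply Fin.ext
            simp
            omega
        · rw [if_neg hp0]
          apply Finset.sum_eq_zero
          intro k _
          rw [if_neg]
          omega
      rw [hb', hc']
      exact hrow p.val (by omega)
    have heq : μ i * w p - a p.val * w p = ∑ k ∈ Finset.univ.erase p, tri (m+1) a b c p k * w k := by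
      have h1 := hMw p
      rw [← Finset.sum_erase_add _ _ (Finset.mem_univ p)] at h1
      rw [hMpp] at h1
      linarith [h1]
    have habs : |μ i - a p.val| * |w p| ≤ (1 - a p.val) * |w p| := by
      have h2 : |μ i - a p.val| * |w p| = |μ i * w p - a p.val * w p| := by
        rw [← abs_mul]; congr 1; ring
      rw [h2, heq]
      calc |∑ k ∈ Finset.univ.erase p, tri (m+1) a b c p k * w k|
          ≤ ∑ k ∈ Finset.univ.erase p, |tri (m+1) a b c p k * w k| := Finset.abs_sum_le_sum_abs _ _
        _ ≤ ∑ k ∈ Finset.univ.erase p, tri (m+1) a b c p k * |w p| := by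
            refine Finset.sum_le_sum fun k hk => ?_
            have hkp : k ≠ p := (Finset.mem_erase.mp hk).1
            rw [abs_mul, abs_of_nonneg (hoffnn k hkp)]
            exact mul_le_mul_of_nonneg_left (hp k (Finset.mem_univ _)) (hoffnn k hkp)
        _ = (∑ k ∈ Finset.univ.erase p, tri (m+1) a b c p k) * |w p| := by
            rw [Finset.sum_mul]
        _ ≤ (1 - a p.val) * |w p| := by
            exact mul_le_mul_of_nonneg_right hoffsum (le_of_lt hwp)
    have habs2 : |μ i - a p.val| ≤ 1 - a p.val :=
      le_of_mul_le_mul_right (by linarith [habs]) hwp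
    have := abs_le.mp habs2
    have hap := ha p.val (by omega)
    linarith [this.1]
  -- final representation
  refine ⟨μ, fun i => U 0 i * U (Fin.last m) i * dv b c m, hμpos, ?_⟩
  intro t
  rw [tri_pow_rel m a b c hb hc t 0 (Fin.last m), hSt t, hentry]
  have h0 : dv b c ((0 : Fin (m+1)) : ℕ) = 1 := rfl
  have hlast : ((Fin.last m) : ℕ) = m := rfl
  rw [h0, hlast]
  simp only [inv_one, one_mul]
  rw [Finset.sum_mul]
  refine Finset.sum_congr rfl fun k _ => ?_
  ring

end TriLC3

lemma seq_match (m : ℕ) (G : ℕ → ℝ) (cc : ℝ) (μ C : Fin (m+1) → ℝ)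
    (hrep : ∀ t, G t = ∑ i, C i * μ i ^ t)
    (hzero : ∀ t < m, G t = 0)
    (hdiag : G m = cc) :
    ∀ t : ℕ, G t = cc * Hz (List.ofFn μ) ((t:ℤ) - m) := by
  set μl : List ℝ := List.ofFn μ with hμl
  have hlen : μl.length = m + 1 := by simp [hμl]
  have hrec : ∀ s : ℕ, ∑ j ∈ Finset.range (m+2), (-1:ℝ)^j * Esym μl j * G (s + (m+1) - j) = 0 := by
    intro s
    have h1 : ∀ j ∈ Finset.range (m+2), (-1:ℝ)^j * Esym μl j * G (s + (m+1) - j)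
        = ∑ i, (C i * μ i ^ s) * ((-1:ℝ)^j * Esym μl j * μ i ^ ((m+1) - j)) := by
      intro j hj
      simp only [Finset.mem_range] at hj
      have he : s + (m+1) - j = s + ((m+1) - j) := by omega
      rw [he, hrep, Finset.mul_sum]
      refine Finset.sum_congr rfl fun i _ => ?_
      rw [pow_add]
      ring
    rw [Finset.sum_congr rfl h1, Finset.sum_comm]
    apply Finset.sum_eq_zero
    intro i _
    rw [← Finset.mul_sum]
    have h2 : ∑ j ∈ Finset.range (m+2), (-1:ℝ)^j * Esym μl j * μ i ^ ((m+1) - j) = 0 := by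
      have h3 := esym_poly μl (μ i)
      rw [hlen] at h3
      rw [h3]
      apply List.prod_eq_zero
      rw [List.mem_map]
      exact ⟨μ i, by rw [hμl, List.mem_ofFn]; exact ⟨i, rfl⟩, sub_self _⟩
    rw [h2, mul_zero]
  intro t
  induction t using Nat.strong_induction_on with
  | _ t ih =>
    rcases lt_trichotomy t m with h | h | h
    · rw [hzero t h, Hz_neg μl (by omega : (t:ℤ) - m < 0), mul_zero]
    · subst h
      rw [hdiag, sub_self, Hz_zero, mul_one]
    · have h1 := hrec (t - (m+1))
      rw [Finset.sum_range_succ'] at h1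
      have hst : ∀ j : ℕ, t - (m+1) + (m+1) - j = t - j := by omega
      have ht0 : (-1:ℝ)^0 * Esym μl 0 * G (t - (m+1) + (m+1) - 0) = G t := by
        rw [hst 0, Esym_zero]
        norm_num
      rw [ht0] at h1
      -- Newton identity for Hz
      have h2 := esym_hz μl ((t:ℤ) - m)
      rw [hlen, if_neg (by omega : ¬ (t:ℤ) - m = 0), Finset.sum_range_succ'] at h2
      have ht0' : (-1:ℝ)^0 * Esym μl 0 * Hz μl ((t:ℤ) - m - (0:ℕ)) = Hz μl ((t:ℤ) - m) := by
        rw [Esym_zero]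
        norm_num
      rw [ht0'] at h2
      -- identify the two partial sums
      have hAB : ∑ j ∈ Finset.range (m+1),
            (-1:ℝ)^(j+1) * Esym μl (j+1) * G (t - (m+1) + (m+1) - (j+1))
          = cc * ∑ j ∈ Finset.range (m+1),
            (-1:ℝ)^(j+1) * Esym μl (j+1) * Hz μl ((t:ℤ) - m - ((j+1:ℕ):ℤ)) := by
        rw [Finset.mul_sum]
        refine Finset.sum_congr rfl fun j hj => ?_
        simp only [Finset.mem_range] at hj
        rw [hst (j+1), ih (t - (j+1)) (by omega)]
        have hcast : ((t - (j+1) : ℕ) : ℤ) - m = (t:ℤ) - m - ((j+1:ℕ):ℤ) := by omega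
        rw [hcast]
        ring
      rw [hAB] at h1
      have hB : Hz μl ((t:ℤ) - m)
          = - ∑ j ∈ Finset.range (m+1),
              (-1:ℝ)^(j+1) * Esym μl (j+1) * Hz μl ((t:ℤ) - m - ((j+1:ℕ):ℤ)) := by
        linarith [h2]
      rw [hB]
      linarith [h1]

theorem tri_lc (m : ℕ) (a b c : ℕ → ℝ)
    (ha : ∀ i ≤ m, (1:ℝ)/2 ≤ a i)
    (hb : ∀ i < m, 0 < b i) (hc : ∀ i < m, 0 < c (i+1))
    (hrow : ∀ i ≤ m, (if i < m then b i else 0) + (if i ≠ 0 then c i else 0) ≤ 1 - a i) :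
    ∀ t : ℕ, 1 ≤ t →
      ((tri (m+1) a b c) ^ (t-1)) 0 (Fin.last m) * ((tri (m+1) a b c) ^ (t+1)) 0 (Fin.last m)
        ≤ (((tri (m+1) a b c) ^ t) 0 (Fin.last m))^2 := by
  obtain ⟨μ, C, hμ, hrep⟩ := tri_spectral m a b c ha hb hc hrow
  have hzero : ∀ t < m, ((tri (m+1) a b c) ^ t) 0 (Fin.last m) = 0 := by
    intro t ht
    exact (triPow_early m a b c t (Fin.last m)).1 (by simpa using ht)
  have hdiag : ((tri (m+1) a b c) ^ m) 0 (Fin.last m) = ∏ i ∈ Finset.range m, b i :=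
    (triPow_early m a b c m (Fin.last m)).2 (by simp)
  have hmatch := seq_match m (fun t => ((tri (m+1) a b c) ^ t) 0 (Fin.last m))
    (∏ i ∈ Finset.range m, b i) μ C hrep hzero hdiag
  try simp only [] at hmatch
  have hμmem : ∀ x ∈ List.ofFn μ, 0 ≤ x := by
    intro x hx
    rw [List.mem_ofFn] at hx
    obtain ⟨i, rfl⟩ := hx
    exact hμ i
  intro t ht
  rw [hmatch (t-1), hmatch t, hmatch (t+1)]
  have e1 : ((t-1:ℕ):ℤ) - m = (t:ℤ) - 1 - m := by omega
  have e2 : ((t+1:ℕ):ℤ) - m = ((t:ℤ) - m) + 1 := by omega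
  have e3 : (t:ℤ) - 1 - m + 1 = (t:ℤ) - m := by ring
  rw [e1, e2]
  have hlc := Hz_lc (List.ofFn μ) hμmem ((t:ℤ) - 1 - m) ((t:ℤ) - m) (by omega)
  rw [e3] at hlc
  set cc := ∏ i ∈ Finset.range m, b i
  set X := Hz (List.ofFn μ) ((t:ℤ) - 1 - m)
  set Y := Hz (List.ofFn μ) ((t:ℤ) - m + 1)
  set Z := Hz (List.ofFn μ) ((t:ℤ) - m)
  have h4 : cc^2 * (X * Y) ≤ cc^2 * (Z * Z) := mul_le_mul_of_nonneg_left hlc (sq_nonneg cc)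
  nlinarith [h4]

section Bridge

variable (e : ℕ) (α β : ℕ → ℝ)

lemma pathQ_colLast : ∀ (t : ℕ) (i : Fin (e+1)),
    ((pathQ (e+1) α β) ^ t) i.castSucc (Fin.last (e+1)) = 0 := by
  intro t i
  cases t with
  | zero =>
    have : i.castSucc ≠ Fin.last (e+1) := by
      intro h
      have := congrArg Fin.val h
      simp at this
      omega
    simp [Matrix.one_apply, this]
  | succ s =>
    rw [pow_succ, Matrix.mul_apply]
    apply Finset.sum_eq_zero
    intro k _
    have : pathQ (e+1) α β k (Fin.last (e+1)) = 0 := by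
      simp [pathQ]
    rw [this, mul_zero]

lemma pathQ_bridge : ∀ (t : ℕ) (i j : Fin (e+1)),
    ((pathQ (e+1) α β) ^ t) i.castSucc j.castSucc
      = ((tri (e+1) α β (fun i => 1 - α i - β i)) ^ t) i j := by
  intro t
  induction t with
  | zero =>
    intro i j
    simp [Matrix.one_apply, Fin.castSucc_inj]
  | succ t ih =>
    intro i j
    rw [pow_succ, pow_succ, Matrix.mul_apply, Matrix.mul_apply]
    rw [Fin.sum_univ_castSucc]
    rw [pathQ_colLast e α β t i, zero_mul, add_zero]
    refine Finset.sum_congr rfl fun k _ => ?_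
    rw [ih i k]
    congr 1
    have hne : j.castSucc ≠ Fin.last (e+1) := by
      intro h
      have := congrArg Fin.val h
      simp at this
      omega
    simp only [pathQ, if_neg hne, pathP, tri, Fin.coe_castSucc]

lemma firstPassage_form (t : ℕ) :
    firstPassage (e+1) α β (t+1)
      = β e * ((tri (e+1) α β (fun i => 1 - α i - β i)) ^ t) 0 (Fin.last e) := by
  rw [firstPassage]
  rw [Fin.sum_univ_castSucc]
  have h0 : (Fin.last (e+1)) = ((0 : Fin (e+1)).castSucc) → False := by
    intro h
    have := congrArg Fin.val h
    simp at this
  have hz : ((pathQ (e+1) α β) ^ t) 0 (Fin.last (e+1)) = 0 := by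
    have h00 : (0 : Fin (e+2)) = (0 : Fin (e+1)).castSucc := by
      apply Fin.ext; simp
    rw [h00]
    exact pathQ_colLast e α β t 0
  rw [hz, zero_mul, add_zero]
  have hterm : ∀ j : Fin (e+1),
      pathP (e+1) α β j.castSucc (Fin.last (e+1)) = if j = Fin.last e then β e else 0 := by
    intro j
    simp only [pathP, Fin.coe_castSucc, Fin.val_last]
    rcases eq_or_ne j (Fin.last e) with h | h
    · subst h
      rw [if_neg (by simp), if_pos (by simp), if_pos rfl, Fin.val_last]
    · have hjv : j.val ≠ e := by
        intro hv; exact h (Fin.ext (by simp [hv]))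
      rw [if_neg (by omega), if_neg (by omega), if_neg (by omega), if_neg h]
  have hsum : ∀ j : Fin (e+1),
      ((pathQ (e+1) α β) ^ t) 0 j.castSucc * pathP (e+1) α β j.castSucc (Fin.last (e+1))
        = if j = Fin.last e
            then β e * ((tri (e+1) α β (fun i => 1 - α i - β i)) ^ t) 0 (Fin.last e)
            else 0 := by
    intro j
    rw [hterm j]
    rcases eq_or_ne j (Fin.last e) with h | h
    · subst h
      rw [if_pos rfl, if_pos rfl]
      have h00 : (0 : Fin (e+2)) = (0 : Fin (e+1)).castSucc := by
        apply Fin.ext; simp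
      rw [h00, pathQ_bridge e α β t 0 (Fin.last e)]
      ring
    · rw [if_neg h, if_neg h, mul_zero]
  rw [Finset.sum_congr rfl (fun j _ => hsum j)]
  rw [Finset.sum_ite_eq' Finset.univ (Fin.last e)]
  rw [if_pos (Finset.mem_univ _)]

end Bridge

lemma pow_entry_continuous (n : ℕ) (A : ℝ → Matrix (Fin n) (Fin n) ℝ)
    (hA : ∀ i j, Continuous fun ε => A ε i j) (t : ℕ) :
    ∀ i j : Fin n, Continuous fun ε => ((A ε) ^ t) i j := by
  induction t with
  | zero =>
    intro i j
    have : (fun ε => ((A ε) ^ 0) i j) = fun _ => if i = j then (1:ℝ) else 0 := by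
      funext ε
      rw [pow_zero, Matrix.one_apply]
    rw [this]
    exact continuous_const
  | succ t ih =>
    intro i j
    have : (fun ε => ((A ε) ^ (t+1)) i j) = fun ε => ∑ k, ((A ε) ^ t) i k * A ε k j := by
      funext ε
      rw [pow_succ, Matrix.mul_apply]
    rw [this]
    exact continuous_finset_sum _ (fun k _ => (ih i k).mul (hA k j))

lemma tri_entry_continuous (n : ℕ) (a β γ : ℕ → ℝ) (i j : Fin n) :
    Continuous fun ε : ℝ => tri n a (fun k => β k - ε) (fun k => γ k + ε) i j := by
  simp only [tri]
  split_ifs with h1 h2 h3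
  · exact continuous_const
  · exact (continuous_const.sub continuous_id)
  · exact (continuous_const.add continuous_id)
  · exact continuous_const

/-- If all loop probabilities satisfy `α i ≥ 1/2` and the upward probabilities are
positive, then the first-passage probability `f_{0,d}(t)` is log-concave in `t`. -/
theorem firstPassage_log_concave (d : ℕ) (hd : 1 ≤ d) (α β : ℕ → ℝ)
    (hα : ∀ i ≤ d, (1 : ℝ) / 2 ≤ α i)
    (hβ : ∀ i < d, 0 < β i)
    (hβd : β d = 0)
    (hsum : ∀ i ≤ d, α i + β i ≤ 1)
    (h0 : α 0 + β 0 = 1) :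
    ∀ t : ℕ, 1 ≤ t →
      firstPassage d α β t ^ 2 ≥
        firstPassage d α β (t - 1) * firstPassage d α β (t + 1) := by
  obtain ⟨e, rfl⟩ : ∃ e, d = e + 1 := ⟨d - 1, by omega⟩
  intro t ht
  by_cases h1 : t = 1
  · subst h1
    have hf0 : firstPassage (e+1) α β (1-1) = 0 := rfl
    rw [hf0, zero_mul]
    exact sq_nonneg _
  · obtain ⟨s, rfl⟩ : ∃ s, t = s + 2 := ⟨t - 2, by omega⟩
    -- the perturbation threshold
    have hne : (Finset.range (e+1)).Nonempty := Finset.nonempty_range_iff.mpr (by omega)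
    set ε₀ := (Finset.range (e+1)).inf' hne β with hε₀
    have hε₀le : ∀ i ≤ e, ε₀ ≤ β i := fun i hi =>
      Finset.inf'_le β (Finset.mem_range.mpr (by omega))
    have hε₀pos : 0 < ε₀ := by
      rw [hε₀, Finset.lt_inf'_iff]
      intro i hi
      rw [Finset.mem_range] at hi
      exact hβ i (by omega)
    set G : ℝ → ℕ → ℝ := fun ε n =>
      ((tri (e+1) α (fun k => β k - ε) (fun k => (1 - α k - β k) + ε)) ^ n) 0 (Fin.last e)
      with hGdef
    have hGcont : ∀ n, Continuous fun ε => G ε n := by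
      intro n
      exact pow_entry_continuous (e+1)
        (fun ε => tri (e+1) α (fun k => β k - ε) (fun k => (1 - α k - β k) + ε))
        (fun i j => tri_entry_continuous (e+1) α β (fun k => 1 - α k - β k) i j) n 0 (Fin.last e)
    have hineq : ∀ ε ∈ Set.Ioo (0:ℝ) ε₀, G ε s * G ε (s+2) ≤ G ε (s+1) ^ 2 := by
      intro ε hε
      obtain ⟨hε1, hε2⟩ := hε
      have hres := tri_lc e α (fun k => β k - ε) (fun k => (1 - α k - β k) + ε)
        (fun i hi => hα i (by omega))
        (fun i hi => by
          have := hε₀le i (by omega)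
          show (0:ℝ) < β i - ε
          linarith)
        (fun i hi => by
          have := hsum (i+1) (by omega)
          show (0:ℝ) < (1 - α (i+1) - β (i+1)) + ε
          linarith)
        ?_ (s+1) (by omega)
      · rw [show s+1-1 = s from rfl, show s+1+1 = s+2 from rfl] at hres
        exact hres
      · intro i hi
        by_cases hie : i < e <;> by_cases hi0 : i = 0
        · subst hi0
          rw [if_pos hie, if_neg (by omega)]
          show β 0 - ε + 0 ≤ 1 - α 0
          linarith
        · rw [if_pos hie, if_pos hi0]
          show (β i - ε) + ((1 - α i - β i) + ε) ≤ 1 - α i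
          linarith
        · subst hi0
          rw [if_neg hie, if_neg (by omega)]
          have hb0 := hβ 0 (by omega)
          linarith
        · rw [if_neg hie, if_pos hi0]
          have hie' : i = e := by omega
          have h2 := hε₀le e (le_refl e)
          show (0:ℝ) + ((1 - α i - β i) + ε) ≤ 1 - α i
          rw [hie']
          linarith
    set F : ℝ → ℝ := fun ε => G ε (s+1) ^ 2 - G ε s * G ε (s+2) with hFdef
    have hFcont : Continuous F :=
      ((hGcont (s+1)).pow 2).sub ((hGcont s).mul (hGcont (s+2)))
    have htend : Filter.Tendsto F (nhdsWithin 0 (Set.Ioi 0)) (nhds (F 0)) :=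
      (hFcont.continuousAt).continuousWithinAt
    have hev : ∀ᶠ ε in nhdsWithin (0:ℝ) (Set.Ioi 0), 0 ≤ F ε := by
      refine Filter.eventually_of_mem (Ioo_mem_nhdsGT_of_mem ⟨le_refl 0, hε₀pos⟩) ?_
      intro ε hε
      have := hineq ε hε
      rw [hFdef]
      simp only []
      linarith
    have hfinal : 0 ≤ F 0 := ge_of_tendsto htend hev
    -- identify F 0 with the unperturbed matrix
    have hb0 : (fun k => β k - (0:ℝ)) = β := by funext k; ring
    have hc0 : (fun k => (1 - α k - β k) + (0:ℝ)) = (fun k => 1 - α k - β k) := by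
      funext k; ring
    have hG0 : ∀ n, G 0 n = ((tri (e+1) α β (fun k => 1 - α k - β k)) ^ n) 0 (Fin.last e) := by
      intro n
      rw [hGdef]
      simp only []
      rw [hb0, hc0]
    -- translate to firstPassage
    have hf1 := firstPassage_form e α β s
    have hf2 := firstPassage_form e α β (s+1)
    have hf3 := firstPassage_form e α β (s+2)
    rw [show s+1+1 = s+2 from rfl] at hf2
    rw [show s+2+1 = s+3 from rfl] at hf3
    rw [show s+2-1 = s+1 from rfl, show s+2+1 = s+3 from rfl, hf1, hf2, hf3, ge_iff_le]
    have hX : 0 ≤ ((tri (e+1) α β (fun k => 1 - α k - β k)) ^ (s+1)) 0 (Fin.last e) ^ 2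
        - ((tri (e+1) α β (fun k => 1 - α k - β k)) ^ s) 0 (Fin.last e)
          * ((tri (e+1) α β (fun k => 1 - α k - β k)) ^ (s+2)) 0 (Fin.last e) := by
      rw [hFdef] at hfinal
      simp only [] at hfinal
      rw [hG0, hG0, hG0] at hfinal
      linarith
    nlinarith [hX, sq_nonneg (β e)]
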